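/- AGM contraction postulate (K−2) fails for sceptical non-monotonic reasoning: there is a defeasible theory D and a contraction D−_a by a literal a (acting only on the superiority relation) such that BS^{+∂}(D−_a) ⊄ BS^{+∂}(D); concretely, with rules ⇒ a (r1), ⇒ ¬a (r2), ⇒ p (r3), a ⇒ ¬p (r4) and > = {(r1, r2)}, D proves +∂ a and −∂ p, while D−_a = (F, R, ∅) proves −∂ a and +∂ p. -/
import Mathlib


namespace DL

abbrev Atom := ℕ

/-- A literal: an atom with a polarity. -/
structure Lit where
  atom : Atom
  pos : Bool
deriving DecidableEq

/-- The complement `∼p` of a literal. -/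
def Lit.neg (l : Lit) : Lit := ⟨l.atom, !l.pos⟩

/-- A defeasible rule: a finite set of antecedent literals and a head literal. -/
structure Rule where
  ante : Finset Lit
  head : Lit
deriving DecidableEq

/-- A defeasible theory: facts, defeasible rules, and a superiority relation. -/
structure DTheory where
  facts : Finset Lit
  rules : Finset Rule
  sup : Rule → Rule → Prop

/-- A superiority relation is acyclic iff its transitive closure is irreflexive. -/
def Acyclic (sup : Rule → Rule → Prop) : Prop :=
  Irreflexive (Relation.TransGen sup)

def DTheory.FactsConsistent (D : DTheory) : Prop :=
  ∀ l ∈ D.facts, l.neg ∉ D.facts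

/-- Well-formedness of a defeasible theory: consistent facts, acyclic superiority
relation defined on the rules of the theory. -/
def DTheory.WellFormed (D : DTheory) : Prop :=
  D.FactsConsistent ∧ Acyclic D.sup ∧ ∀ r s, D.sup r s → r ∈ D.rules ∧ s ∈ D.rules

/-- Proof tags: Δ, Σ, σ, ω, φ, ∂. -/
inductive Tag | delta | Sig | sgm | omg | phi | prt
deriving DecidableEq

/-- A tagged literal: a tag, a sign (`true` = `+`, `false` = `−`), and a literal. -/
abbrev TLit := Tag × Bool × Lit

/-- The proof conditions of Defeasible Logic (defeasible rules only), relative to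
the preceding part `P` of a proof sequence. -/
def Cond (D : DTheory) (P : List TLit) : Tag → Bool → Lit → Prop
  | .delta, true, q => q ∈ D.facts
  | .delta, false, q => q ∉ D.facts
  | .Sig, true, q =>
      (Tag.delta, true, q) ∈ P ∨
      ∃ r ∈ D.rules, r.head = q ∧ ∀ a ∈ r.ante, (Tag.Sig, true, a) ∈ P
  | .Sig, false, q =>
      (Tag.delta, true, q) ∉ P ∧
      ∀ r ∈ D.rules, r.head = q → ∃ a ∈ r.ante, (Tag.Sig, false, a) ∈ P
  | .sgm, true, q =>
      (Tag.delta, true, q) ∈ P ∨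
      ∃ r ∈ D.rules, r.head = q ∧ (∀ a ∈ r.ante, (Tag.sgm, true, a) ∈ P) ∧
        ∀ s ∈ D.rules, s.head = q.neg →
          (∃ a ∈ s.ante, (Tag.prt, false, a) ∈ P) ∨ ¬ D.sup s r
  | .sgm, false, q =>
      (Tag.delta, true, q) ∉ P ∧
      ∀ r ∈ D.rules, r.head = q →
        (∃ a ∈ r.ante, (Tag.sgm, false, a) ∈ P) ∨
        ∃ s ∈ D.rules, s.head = q.neg ∧ (∀ a ∈ s.ante, (Tag.prt, true, a) ∈ P) ∧ D.sup s r
  | .omg, true, q =>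
      (Tag.delta, true, q) ∈ P ∨
      ∃ r ∈ D.rules, r.head = q ∧ ∀ a ∈ r.ante, (Tag.prt, true, a) ∈ P
  | .omg, false, q =>
      (Tag.delta, true, q) ∉ P ∧
      ∀ r ∈ D.rules, r.head = q → ∃ a ∈ r.ante, (Tag.prt, false, a) ∈ P
  | .phi, true, q =>
      (Tag.delta, true, q) ∈ P ∨
      ∃ r ∈ D.rules, r.head = q ∧ (∀ a ∈ r.ante, (Tag.phi, true, a) ∈ P) ∧
        ∀ s ∈ D.rules, s.head = q.neg → ∃ a ∈ s.ante, (Tag.Sig, false, a) ∈ P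
  | .phi, false, q =>
      (Tag.delta, true, q) ∉ P ∧
      ∀ r ∈ D.rules, r.head = q →
        (∃ a ∈ r.ante, (Tag.phi, false, a) ∈ P) ∨
        ∃ s ∈ D.rules, s.head = q.neg ∧ ∀ a ∈ s.ante, (Tag.Sig, true, a) ∈ P
  | .prt, true, q =>
      (Tag.delta, true, q) ∈ P ∨
      ((Tag.delta, false, q.neg) ∈ P ∧
       (∃ r ∈ D.rules, r.head = q ∧ ∀ a ∈ r.ante, (Tag.prt, true, a) ∈ P) ∧
       ∀ s ∈ D.rules, s.head = q.neg →
         (∃ a ∈ s.ante, (Tag.prt, false, a) ∈ P) ∨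
         ∃ t ∈ D.rules, t.head = q ∧ (∀ a ∈ t.ante, (Tag.prt, true, a) ∈ P) ∧ D.sup t s)
  | .prt, false, q =>
      (Tag.delta, true, q) ∉ P ∧
      ((Tag.delta, true, q.neg) ∈ P ∨
       (∀ r ∈ D.rules, r.head = q → ∃ a ∈ r.ante, (Tag.prt, false, a) ∈ P) ∨
       ∃ s ∈ D.rules, s.head = q.neg ∧ (∀ a ∈ s.ante, (Tag.prt, true, a) ∈ P) ∧
         ∀ t ∈ D.rules, t.head = q →
           (∃ a ∈ t.ante, (Tag.prt, false, a) ∈ P) ∨ ¬ D.sup t s)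

/-- A proof (derivation) is a finite sequence of tagged literals each of which
satisfies the proof condition relative to the preceding part of the sequence. -/
inductive ValidProof (D : DTheory) : List TLit → Prop
  | nil : ValidProof D []
  | snoc {P : List TLit} {t : Tag} {s : Bool} {q : Lit} :
      ValidProof D P → Cond D P t s q → ValidProof D (P ++ [(t, s, q)])

/-- `D ⊢ ±# q`: some valid proof in `D` contains the tagged literal. -/
def Proves (D : DTheory) (t : Tag) (s : Bool) (q : Lit) : Prop :=
  ∃ P, ValidProof D P ∧ (t, s, q) ∈ P

/-- A theory is consistent iff it never defeasibly proves both a literal and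
its complement. -/
def Consistent (D : DTheory) : Prop :=
  ∀ p : Lit, ¬ (Proves D .prt true p ∧ Proves D .prt true p.neg)

/-- `a` depends on `b` iff `b = a`, or for every rule for `a` either `b` is an
antecedent or some antecedent depends on `b` (least such relation,
impredicatively encoded). -/
def DependsOn (D : DTheory) (a b : Lit) : Prop :=
  ∀ S : Lit → Lit → Prop,
    (∀ x, S x x) →
    (∀ x y, (∀ r ∈ D.rules, r.head = x → y ∈ r.ante ∨ ∃ c ∈ r.ante, S c y) → S x y) →
    S a b

/-- `p` is ∂-unreachable iff every rule for `p` either has two antecedents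
depending on complementary literals or has a ∂-unreachable antecedent
(least such predicate, impredicatively encoded). -/
def Unreachable (D : DTheory) (p : Lit) : Prop :=
  ∀ S : Lit → Prop,
    (∀ x, (∀ r ∈ D.rules, r.head = x →
        (∃ l : Lit, ∃ a ∈ r.ante, ∃ b ∈ r.ante, DependsOn D a l ∧ DependsOn D b l.neg) ∨
        ∃ d ∈ r.ante, S d) → S x) →
    S p

/-- The literal `p` appears in the theory `D` (its atom occurs in `D`). -/
def AppearsIn (p : Lit) (D : DTheory) : Prop :=
  (∃ l ∈ D.facts, l.atom = p.atom) ∨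
  ∃ r ∈ D.rules, r.head.atom = p.atom ∨ ∃ l ∈ r.ante, l.atom = p.atom

/-- Positive part of the belief set of a defeasible theory. -/
def BSplus (D : DTheory) : Set Lit := {p | AppearsIn p D ∧ Proves D .prt true p}

/-- Negative part of the belief set of a defeasible theory. -/
def BSminus (D : DTheory) : Set Lit := {p | AppearsIn p D ∧ Proves D .prt false p}

/-- The belief set of a defeasible theory. -/
def BS (D : DTheory) : Set Lit := BSplus D ∪ BSminus D

/-- Edge of the atom dependency graph: from atom `a` to atom `b` whenever some
rule has head with atom `b` and an antecedent literal with atom `a`. -/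
def AtomEdge (D : DTheory) (a b : Atom) : Prop :=
  ∃ r ∈ D.rules, r.head.atom = b ∧ ∃ l ∈ r.ante, l.atom = a

/-- A theory is decisive iff every literal appearing in it is defeasibly
provable or defeasibly refuted. -/
def Decisive (D : DTheory) : Prop :=
  ∀ p : Lit, AppearsIn p D → Proves D .prt true p ∨ Proves D .prt false p

end DL


open DL in
/-- AGM postulate (K−2) fails: with rules `⇒ a`, `⇒ ¬a`, `⇒ p`, `a ⇒ ¬p` and
`> = {(r1, r2)}`, `D` proves `+∂ a` and `−∂ p`, while the contraction with
empty superiority relation proves `−∂ a` and `+∂ p`, so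
`BS⁺(D−_a) ⊄ BS⁺(D)`. -/
theorem stmt17 (a p : Lit) (hap : a.atom ≠ p.atom)
    (r1 r2 r3 r4 : Rule)
    (h1 : r1 = ⟨∅, a⟩) (h2 : r2 = ⟨∅, a.neg⟩)
    (h3 : r3 = ⟨∅, p⟩) (h4 : r4 = ⟨{a}, p.neg⟩)
    (D Dc : DTheory)
    (hD : D = ⟨∅, {r1, r2, r3, r4}, fun x y => x = r1 ∧ y = r2⟩)
    (hDc : Dc = ⟨∅, {r1, r2, r3, r4}, fun _ _ => False⟩) :
    Proves D .prt true a ∧ Proves D .prt false p ∧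
    Proves Dc .prt false a ∧ Proves Dc .prt true p ∧
    ¬ BSplus Dc ⊆ BSplus D := by

  subst h1 h2 h3 h4 hD hDc
  -- basic literal facts
  have hane : a ≠ a.neg := by
    intro h; have := congrArg Lit.pos h; simp [Lit.neg] at this
  have hpne : p ≠ p.neg := by
    intro h; have := congrArg Lit.pos h; simp [Lit.neg] at this
  have hpa : p ≠ a.neg := by
    intro h; have := congrArg Lit.atom h; simp [Lit.neg] at this; exact hap this.symm
  have hpna : p.neg ≠ a.neg := by
    intro h; have := congrArg Lit.atom h; simp [Lit.neg] at this; exact hap this.symm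
  have hap' : a ≠ p := by intro h; exact hap (congrArg Lit.atom h)
  have hanp : a ≠ p.neg := by
    intro h; have := congrArg Lit.atom h; simp [Lit.neg] at this; exact hap this
  have hnap : a.neg ≠ p := by
    intro h; have := congrArg Lit.atom h; simp [Lit.neg] at this; exact hap this
  set R1 : Rule := ⟨∅, a⟩ with hR1
  set R2 : Rule := ⟨∅, a.neg⟩ with hR2
  set R3 : Rule := ⟨∅, p⟩ with hR3
  set R4 : Rule := ⟨{a}, p.neg⟩ with hR4
  set RS : Finset Rule := {R1, R2, R3, R4} with hRS
  -- head analysis: which rules have which head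
  have hmem : ∀ r ∈ RS, r = R1 ∨ r = R2 ∨ r = R3 ∨ r = R4 := by
    intro r hr
    simpa [hRS, Finset.mem_insert, Finset.mem_singleton] using hr
  have headA : ∀ r ∈ RS, r.head = a → r = R1 := by
    intro r hr hh
    rcases hmem r hr with rfl | rfl | rfl | rfl
    · rfl
    · exact absurd hh.symm hane
    · exact absurd hh hap'.symm
    · exact absurd hh hanp.symm
  have headNA : ∀ r ∈ RS, r.head = a.neg → r = R2 := by
    intro r hr hh
    rcases hmem r hr with rfl | rfl | rfl | rfl
    · exact absurd hh hane
    · rfl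
    · exact absurd hh hpa
    · exact absurd hh hpna
  have headP : ∀ r ∈ RS, r.head = p → r = R3 := by
    intro r hr hh
    rcases hmem r hr with rfl | rfl | rfl | rfl
    · exact absurd hh hap'
    · exact absurd hh hnap
    · rfl
    · exact absurd hh hpne.symm
  have headNP : ∀ r ∈ RS, r.head = p.neg → r = R4 := by
    intro r hr hh
    rcases hmem r hr with rfl | rfl | rfl | rfl
    · exact absurd hh hanp
    · exact absurd hh.symm hpna
    · exact absurd hh hpne
    · rfl
  set D : DTheory := ⟨∅, RS, fun x y => x = R1 ∧ y = R2⟩ with hDdef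
  set Dc : DTheory := ⟨∅, RS, fun _ _ => False⟩ with hDcdef
  have memR1 : R1 ∈ RS := by simp [hRS]
  have memR2 : R2 ∈ RS := by simp [hRS]
  have memR3 : R3 ∈ RS := by simp [hRS]
  have memR4 : R4 ∈ RS := by simp [hRS]
  have hR4ne2 : R4 ≠ R2 := by
    intro h; exact hpna (congrArg Rule.head h)
  have hR3ne1 : R3 ≠ R1 := by
    intro h; exact hap' ((congrArg Rule.head h).symm)
  -- D proves +∂ a and −∂ p
  have cD1 : Cond D [] .delta false a.neg := by
    show a.neg ∉ D.facts; simp [hDdef]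
  have cD2 : Cond D [(.delta, false, a.neg)] .prt true a := by
    refine Or.inr ⟨by simp, ⟨R1, memR1, rfl, by simp [hR1]⟩, ?_⟩
    intro s hs hh
    refine Or.inr ⟨R1, memR1, rfl, by simp [hR1], rfl, headNA s hs hh⟩
  have cD3 : Cond D [(.delta, false, a.neg), (.prt, true, a)] .prt false p := by
    constructor
    · simp [Prod.ext_iff]
    · refine Or.inr (Or.inr ⟨R4, memR4, rfl, ?_, ?_⟩)
      · intro x hx
        simp [hR4] at hx; subst hx; simp
      · intro t ht hh
        have := headP t ht hh; subst this
        exact Or.inr (fun h => hR3ne1 h.1)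
  have vD : ValidProof D [(.delta, false, a.neg), (.prt, true, a), (.prt, false, p)] := by
    have v0 : ValidProof D ([] ++ [((.delta : Tag), false, a.neg)]) := .snoc .nil cD1
    have v1 : ValidProof D ([(.delta, false, a.neg)] ++ [((.prt : Tag), true, a)]) :=
      .snoc v0 cD2
    have v2 : ValidProof D ([(.delta, false, a.neg), (.prt, true, a)] ++
        [((.prt : Tag), false, p)]) := .snoc v1 cD3
    simpa using v2
  have pD1 : Proves D .prt true a := ⟨_, vD, by simp⟩
  have pD2 : Proves D .prt false p := ⟨_, vD, by simp⟩
  -- Dc proves −∂ a and +∂ p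
  have cC1 : Cond Dc [] .prt false a := by
    refine ⟨by simp, Or.inr (Or.inr ⟨R2, memR2, rfl, by simp [hR2], ?_⟩)⟩
    intro t ht hh
    exact Or.inr (fun h => h)
  have cC2 : Cond Dc [(.prt, false, a)] .delta false p.neg := by
    show p.neg ∉ Dc.facts; simp [hDcdef]
  have cC3 : Cond Dc [(.prt, false, a), (.delta, false, p.neg)] .prt true p := by
    refine Or.inr ⟨by simp, ⟨R3, memR3, rfl, by simp [hR3]⟩, ?_⟩
    intro s hs hh
    have := headNP s hs hh; subst this
    exact Or.inl ⟨a, by simp [hR4], by simp⟩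
  have vC : ValidProof Dc [(.prt, false, a), (.delta, false, p.neg), (.prt, true, p)] := by
    have v0 : ValidProof Dc ([] ++ [((.prt : Tag), false, a)]) := .snoc .nil cC1
    have v1 : ValidProof Dc ([(.prt, false, a)] ++ [((.delta : Tag), false, p.neg)]) :=
      .snoc v0 cC2
    have v2 : ValidProof Dc ([(.prt, false, a), (.delta, false, p.neg)] ++
        [((.prt : Tag), true, p)]) := .snoc v1 cC3
    simpa using v2
  have pC1 : Proves Dc .prt false a := ⟨_, vC, by simp⟩
  have pC2 : Proves Dc .prt true p := ⟨_, vC, by simp⟩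
  -- D never proves (prt, false, a) nor (prt, true, p)
  have key : ∀ P, ValidProof D P →
      ((Tag.delta, true, p) : TLit) ∉ P ∧ ((Tag.delta, true, a.neg) : TLit) ∉ P ∧
      ((Tag.prt, false, a) : TLit) ∉ P ∧ ((Tag.prt, true, p) : TLit) ∉ P := by
    intro P hP
    induction hP with
    | nil => simp
    | @snoc P t s q hv hc ih =>
      obtain ⟨i1, i2, i3, i4⟩ := ih
      have hnew : ((t, s, q) : TLit) ≠ (Tag.delta, true, p) ∧
          ((t, s, q) : TLit) ≠ (Tag.delta, true, a.neg) ∧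
          ((t, s, q) : TLit) ≠ (Tag.prt, false, a) ∧
          ((t, s, q) : TLit) ≠ (Tag.prt, true, p) := by
        refine ⟨?_, ?_, ?_, ?_⟩ <;> intro he <;>
          obtain ⟨rfl, rfl, rfl⟩ := Prod.mk.injEq .. ▸ (by
            exact ⟨congrArg Prod.fst he, congrArg (Prod.fst ∘ Prod.snd) he,
              congrArg (Prod.snd ∘ Prod.snd) he⟩ :
              t = _ ∧ s = _ ∧ q = _)
        · -- (delta, true, p) : hc says p ∈ facts = ∅
          have : p ∈ D.facts := hc
          simp [hDdef] at this
        · have : a.neg ∈ D.facts := hc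
          simp [hDdef] at this
        · -- (prt, false, a)
          obtain ⟨-, h6⟩ := hc
          rcases h6 with h6 | h6 | h6
          · exact i2 h6
          · obtain ⟨x, hx, -⟩ := h6 R1 memR1 rfl
            simp [hR1] at hx
          · obtain ⟨sr, hsr, hh, -, hall⟩ := h6
            have := headNA sr hsr hh; subst this
            rcases hall R1 memR1 rfl with ⟨x, hx, -⟩ | hns
            · simp [hR1] at hx
            · exact hns ⟨rfl, rfl⟩
        · -- (prt, true, p)
          rcases hc with h6 | ⟨-, -, hall⟩
          · exact i1 h6
          · rcases hall R4 memR4 rfl with ⟨x, hx, hmm⟩ | ⟨tr, htr, hth, -, -, h42⟩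
            · simp [hR4] at hx; subst hx
              exact i3 hmm
            · exact hR4ne2 h42
      refine ⟨?_, ?_, ?_, ?_⟩ <;> intro h <;>
        rcases List.mem_append.1 h with h | h
      · exact i1 h
      · exact hnew.1 (List.mem_singleton.1 h).symm
      · exact i2 h
      · exact hnew.2.1 (List.mem_singleton.1 h).symm
      · exact i3 h
      · exact hnew.2.2.1 (List.mem_singleton.1 h).symm
      · exact i4 h
      · exact hnew.2.2.2 (List.mem_singleton.1 h).symm
  refine ⟨pD1, pD2, pC1, pC2, ?_⟩
  intro hsub
  have hpmem : p ∈ BSplus Dc := by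
    refine ⟨Or.inr ⟨R3, ?_, Or.inl rfl⟩, pC2⟩
    simp [hDcdef, hRS]
  obtain ⟨-, PP, hPP, hmemP⟩ := hsub hpmem
  exact (key PP hPP).2.2.2 hmemP
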